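/- Let ψ be a continuous frame for H with sup_x ‖ψ_x‖ ≤ C, w a continuous weight whose associated weight m := m_w is admissible, ‖R‖_{A_m} < ∞, and suppose ψ has property D[δ,m] with respect to a moderate admissible covering U. Fix z ∈ X and set v := m(·,z). Then for each 1 ≤ p ≤ ∞ there exists a constant C' > 0 such that for every F ∈ L^p_w the function R(F)(x) := ∫_X F(y) R(x,y) dμ(y) satisfies |R(F)(x)| ≤ C' v(x) ‖F‖_{L^p_w} for almost every x ∈ X; that is, R maps L^p_w continuously into L^∞_{1/v}. -/

import Mathlib

open MeasureTheory ENNReal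
open scoped ENNReal NNReal

noncomputable section

local notation "⟪" x ", " y "⟫" => @inner ℂ _ _ x y

/-- The weight on `X × X` associated to a weight `w` on `X`. -/
def mw {X : Type*} (w : X → ℝ) (x y : X) : ℝ :=
  max (w x / w y) (w y / w x)

/-- The norm of the Banach algebra `A_m` of kernels on `X × X`. -/
def amNorm {X : Type*} [MeasurableSpace X] (μ : MeasureTheory.Measure X)
    (m K : X → X → ℝ) : ℝ≥0∞ :=
  max (essSup (fun x => ∫⁻ y, ENNReal.ofReal (|K x y| * m x y) ∂μ) μ)
      (essSup (fun y => ∫⁻ x, ENNReal.ofReal (|K x y| * m x y) ∂μ) μ)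

/-- The oscillation kernel `osc_U(x,y) = sup_{z ∈ Q_y} |R(x,y) − R(x,z)|`, where
`Q_y = ∪_{i : y ∈ U_i} U_i`. -/
def oscU {X I : Type*} (R : X → X → ℂ) (U : I → Set X) (x y : X) : ℝ :=
  sSup ((fun z => ‖R x y - R x z‖) '' ⋃ (i : I) (_ : y ∈ U i), U i)

/-- A moderate admissible covering `U = (U_i)_{i∈I}` of `X`. -/
structure ModCover (X : Type*) [TopologicalSpace X] [MeasurableSpace X]
    (μ : MeasureTheory.Measure X) (I : Type*) where
  U : I → Set X
  measU : ∀ i, MeasurableSet (U i)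
  relCompact : ∀ i, IsCompact (closure (U i))
  interiorNonempty : ∀ i, (interior (U i)).Nonempty
  covers : (⋃ i, U i) = Set.univ
  N : ℕ
  overlapFin : ∀ j : I, {i : I | (U i ∩ U j).Nonempty}.Finite
  overlapBound : ∀ j : I, {i : I | (U i ∩ U j).Nonempty}.ncard ≤ N
  measLower : ℝ≥0∞
  measLowerPos : 0 < measLower
  lower : ∀ i, measLower ≤ μ (U i)
  finiteMeas : ∀ i, μ (U i) < ⊤
  Ctilde : ℝ≥0∞
  CtildeFin : Ctilde < ⊤
  moderate : ∀ i j, (U i ∩ U j).Nonempty → μ (U i) ≤ Ctilde * μ (U j)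

section Aux

variable {X : Type*}

lemma one_le_mw {w : X → ℝ} (hw : ∀ x, 0 < w x) (x y : X) : 1 ≤ mw w x y := by
  rcases le_total (w x) (w y) with h | h
  · exact le_max_of_le_right ((one_le_div (hw x)).2 h)
  · exact le_max_of_le_left ((one_le_div (hw y)).2 h)

lemma mw_nonneg {w : X → ℝ} (hw : ∀ x, 0 < w x) (x y : X) : 0 ≤ mw w x y :=
  zero_le_one.trans (one_le_mw hw x y)

lemma mw_symm (w : X → ℝ) (x y : X) : mw w x y = mw w y x := max_comm _ _

lemma mw_le_mul {w : X → ℝ} (hw : ∀ x, 0 < w x) (x t y : X) :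
    mw w x y ≤ mw w x t * mw w t y := by
  have hx := hw x; have ht := hw t; have hy := hw y
  have h1 : w x / w y = (w x / w t) * (w t / w y) := by field_simp
  have h2 : w y / w x = (w y / w t) * (w t / w x) := by field_simp
  refine max_le ?_ ?_
  · rw [h1]
    exact mul_le_mul (le_max_left _ _) (le_max_left _ _) (by positivity) (mw_nonneg hw x t)
  · rw [h2, mul_comm]
    exact mul_le_mul (le_max_right _ _) (le_max_right _ _) (by positivity) (mw_nonneg hw x t)

lemma holder_aux {α : Type*} [MeasurableSpace α] {μ : MeasureTheory.Measure α}
    {h : α → ℝ} {g : α → ℝ≥0∞}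
    (hh : AEMeasurable h μ) (hg : AEMeasurable g μ)
    {p : ℝ≥0∞} (hp : 1 ≤ p) {M : ℝ≥0∞} (hM : M ≠ ⊤)
    (hg1 : ∫⁻ a, g a ∂μ ≤ M) (hginf : ∀ a, g a ≤ M) :
    ∫⁻ a, (‖h a‖₊ : ℝ≥0∞) * g a ∂μ ≤ eLpNorm h p μ * M := by
  rcases eq_or_ne M 0 with hM0 | hM0
  · subst hM0
    have hg0 : ∀ a, g a = 0 := fun a => le_antisymm (hginf a) zero_le
    simp [hg0]
  rcases eq_or_ne p ⊤ with hptop | hptop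
  · subst hptop
    rcases eq_or_ne (eLpNormEssSup h μ) ⊤ with htop | htop
    · rw [eLpNorm_exponent_top, htop, ENNReal.top_mul hM0]
      exact le_top
    · calc ∫⁻ a, (‖h a‖₊ : ℝ≥0∞) * g a ∂μ
          ≤ ∫⁻ a, eLpNormEssSup h μ * g a ∂μ := by
            refine lintegral_mono_ae ?_
            filter_upwards [ae_le_eLpNormEssSup (f := h) (μ := μ)] with a ha
            exact mul_le_mul_left ha _
        _ = eLpNormEssSup h μ * ∫⁻ a, g a ∂μ := lintegral_const_mul' _ _ htop
        _ ≤ eLpNormEssSup h μ * M := mul_le_mul_right hg1 _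
        _ = eLpNorm h ⊤ μ * M := by rw [eLpNorm_exponent_top]
  rcases eq_or_ne p 1 with hp1 | hp1
  · subst hp1
    calc ∫⁻ a, (‖h a‖₊ : ℝ≥0∞) * g a ∂μ
        ≤ ∫⁻ a, (‖h a‖₊ : ℝ≥0∞) * M ∂μ :=
          lintegral_mono fun a => mul_le_mul_right (hginf a) _
      _ = (∫⁻ a, (‖h a‖₊ : ℝ≥0∞) ∂μ) * M := lintegral_mul_const' _ _ hM
      _ = eLpNorm h 1 μ * M := by rw [eLpNorm_one_eq_lintegral_enorm]; rfl
  -- now 1 < p < ∞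
  have hp0 : p ≠ 0 := by positivity
  have hplt : 1 < p := lt_of_le_of_ne hp (Ne.symm hp1)
  have hpr : 1 < p.toReal := by
    rw [← ENNReal.toReal_one]
    exact (ENNReal.toReal_lt_toReal (by simp) hptop).2 hplt
  set pr := p.toReal with hprdef
  set qr := Real.conjExponent pr with hqrdef
  have hpq : pr.HolderConjugate qr := Real.HolderConjugate.conjExponent hpr
  have hqr1 : 1 < qr := hpq.symm.lt
  have hqr0 : (0:ℝ) < qr := lt_trans one_pos hqr1
  have hHolder := ENNReal.lintegral_mul_le_Lp_mul_Lq μ hpq hh.enorm hg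
  have hfirst : (∫⁻ a, (‖h a‖₊ : ℝ≥0∞) ^ pr ∂μ) ^ (1 / pr) = eLpNorm h p μ :=
    by rw [eLpNorm_eq_lintegral_rpow_enorm_toReal hp0 hptop]; rfl
  have hsecond : (∫⁻ a, g a ^ qr ∂μ) ^ (1 / qr) ≤ M := by
    have hstep : ∀ a, g a ^ qr ≤ M ^ (qr - 1) * g a := by
      intro a
      rcases eq_or_ne (g a) 0 with h0 | h0
      · simp [h0, ENNReal.zero_rpow_of_pos hqr0]
      · have hgtop : g a ≠ ⊤ := ((hginf a).trans_lt hM.lt_top).ne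
        calc g a ^ qr = g a ^ (qr - 1 + 1) := by ring_nf
          _ = g a ^ (qr - 1) * g a ^ (1:ℝ) := ENNReal.rpow_add _ _ h0 hgtop
          _ = g a ^ (qr - 1) * g a := by rw [ENNReal.rpow_one]
          _ ≤ M ^ (qr - 1) * g a :=
            mul_le_mul_left (ENNReal.rpow_le_rpow (hginf a) (by linarith)) _
    calc (∫⁻ a, g a ^ qr ∂μ) ^ (1 / qr)
        ≤ (∫⁻ a, M ^ (qr - 1) * g a ∂μ) ^ (1 / qr) :=
          ENNReal.rpow_le_rpow (lintegral_mono hstep) (by positivity)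
      _ = (M ^ (qr - 1) * ∫⁻ a, g a ∂μ) ^ (1 / qr) := by
          rw [lintegral_const_mul' _ _ (ENNReal.rpow_ne_top_of_nonneg (by linarith) hM)]
      _ ≤ (M ^ (qr - 1) * M) ^ (1 / qr) := by
          exact ENNReal.rpow_le_rpow (mul_le_mul_right hg1 _) (by positivity)
      _ = (M ^ qr) ^ (1 / qr) := by
          congr 1
          have h1 : M ^ (qr - 1) * M = M ^ (qr - 1) * M ^ (1:ℝ) := by
            rw [ENNReal.rpow_one]
          rw [h1, ← ENNReal.rpow_add _ _ hM0 hM]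
          congr 1
          ring
      _ = M := by
          rw [← ENNReal.rpow_mul, mul_one_div_cancel hqr0.ne', ENNReal.rpow_one]
  calc ∫⁻ a, (‖h a‖₊ : ℝ≥0∞) * g a ∂μ
      = ∫⁻ a, ((fun a => (‖h a‖₊ : ℝ≥0∞)) * g) a ∂μ := rfl
    _ ≤ (∫⁻ a, (‖h a‖₊ : ℝ≥0∞) ^ pr ∂μ) ^ (1 / pr) * (∫⁻ a, g a ^ qr ∂μ) ^ (1 / qr) := hHolder
    _ ≤ eLpNorm h p μ * M := by rw [hfirst]; exact mul_le_mul_right hsecond _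

end Aux

/-- Under property `D[δ,m]` the kernel `R` maps `L^p_w` continuously into
`L^∞_{1/v}`:  `|R(F)(x)| ≤ C'·v(x)·‖F‖_{L^p_w}` for a.e. `x`. -/
theorem R_maps_Lpw_into_Linfty_invv
    {X : Type*} [TopologicalSpace X] [T2Space X] [LocallyCompactSpace X]
    [SigmaCompactSpace X] [MeasurableSpace X] [BorelSpace X]
    (μ : MeasureTheory.Measure X) [μ.Regular] [μ.IsOpenPosMeasure]
    {H : Type*} [NormedAddCommGroup H] [InnerProductSpace ℂ H] [CompleteSpace H]
    [TopologicalSpace.SeparableSpace H]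
    (ψ : X → H)
    (hcont : ∀ f : H, Continuous fun x => ⟪ψ x, f⟫)
    (C₁ C₂ : ℝ) (hC₁ : 0 < C₁) (hC₁₂ : C₁ ≤ C₂)
    (hInt : ∀ f : H, Integrable (fun x => ‖⟪ψ x, f⟫‖ ^ 2) μ)
    (hlow : ∀ f : H, C₁ * ‖f‖ ^ 2 ≤ ∫ x, ‖⟪ψ x, f⟫‖ ^ 2 ∂μ)
    (hup : ∀ f : H, ∫ x, ‖⟪ψ x, f⟫‖ ^ 2 ∂μ ≤ C₂ * ‖f‖ ^ 2)
    (S : H →L[ℂ] H)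
    (hS : ∀ f g : H, ⟪g, S f⟫ = ∫ x, ⟪ψ x, f⟫ * ⟪g, ψ x⟫ ∂μ)
    (Sinv : H →L[ℂ] H)
    (hleft : ∀ f, Sinv (S f) = f) (hright : ∀ f, S (Sinv f) = f)
    (C : ℝ) (hψbd : ∀ x, ‖ψ x‖ ≤ C)
    (w : X → ℝ) (hw : Continuous w) (hwpos : ∀ x, 0 < w x)
    (hR : amNorm μ (mw w) (fun x y => ‖⟪Sinv (ψ x), ψ y⟫‖) < ⊤)
    {I : Type*} [Countable I]
    (𝒰 : ModCover X μ I)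
    (CmU : ℝ) (hcover : ∀ i, ∀ x ∈ 𝒰.U i, ∀ y ∈ 𝒰.U i, mw w x y ≤ CmU)
    (δ : ℝ) (hδ : 0 < δ)
    (hosc : amNorm μ (mw w) (oscU (fun x y => ⟪Sinv (ψ x), ψ y⟫) 𝒰.U) <
      ENNReal.ofReal δ)
    (z : X) :
    ∀ p : ℝ≥0∞, 1 ≤ p →
      ∃ C' : ℝ≥0∞, 0 < C' ∧ C' < ⊤ ∧
        ∀ F : X → ℂ, AEStronglyMeasurable F μ →
          MeasureTheory.eLpNorm (fun x => ‖F x‖ * w x) p μ < ⊤ →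
          (∀ᵐ x ∂μ, Integrable (fun y => F y * ⟪Sinv (ψ x), ψ y⟫) μ) ∧
          ∀ᵐ x ∂μ, (‖∫ y, F y * ⟪Sinv (ψ x), ψ y⟫ ∂μ‖₊ : ℝ≥0∞) ≤
            C' * ENNReal.ofReal (mw w x z) *
              MeasureTheory.eLpNorm (fun x => ‖F x‖ * w x) p μ := by
  intro p hp
  have hm1 : ∀ a b : X, 1 ≤ mw w a b := one_le_mw hwpos
  have hm0 : ∀ a b : X, (0:ℝ) ≤ mw w a b := mw_nonneg hwpos
  have hmcont : ∀ x : X, Continuous fun y => mw w x y := fun x =>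
    Continuous.max (continuous_const.div hw fun y => (hwpos y).ne') (hw.div_const _)
  have hRcont : ∀ x : X, Continuous fun y => (⟪Sinv (ψ x), ψ y⟫ : ℂ) := by
    intro x
    have h : (fun y => (⟪Sinv (ψ x), ψ y⟫ : ℂ)) =
        fun y => (starRingEnd ℂ) ⟪ψ y, Sinv (ψ x)⟫ :=
      funext fun y => (inner_conj_symm _ _).symm
    rw [h]
    exact RCLike.continuous_conj.comp (hcont _)
  obtain ⟨i₀, hzi₀⟩ : ∃ i, z ∈ 𝒰.U i := by
    have hz : z ∈ ⋃ i, 𝒰.U i := by rw [𝒰.covers]; trivial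
    exact Set.mem_iUnion.mp hz
  have hCmU1 : (1:ℝ) ≤ CmU := by
    have h := hcover i₀ z hzi₀ z hzi₀
    rwa [mw, div_self (hwpos z).ne', max_self] at h
  have hCmU0 : (0:ℝ) ≤ CmU := zero_le_one.trans hCmU1
  have hD0 : 𝒰.measLower ≠ 0 := 𝒰.measLowerPos.ne'
  have hDtop : 𝒰.measLower ≠ ⊤ := ((𝒰.lower i₀).trans_lt (𝒰.finiteMeas i₀)).ne
  set A := amNorm μ (mw w) (fun x y => ‖⟪Sinv (ψ x), ψ y⟫‖) with hAdef
  have hAtop : A ≠ ⊤ := hR.ne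
  set K := ENNReal.ofReal CmU * (ENNReal.ofReal δ + A) with hKdef
  have hKtop : K ≠ ⊤ := by
    rw [hKdef]
    exact ENNReal.mul_ne_top ENNReal.ofReal_ne_top
      (ENNReal.add_ne_top.2 ⟨ENNReal.ofReal_ne_top, hAtop⟩)
  set B := K / 𝒰.measLower with hBdef
  have hBtop : B ≠ ⊤ := (ENNReal.div_lt_top hKtop hD0).ne
  set M := max A B with hMdef
  have hMtop : M ≠ ⊤ := by
    rw [hMdef]; exact (max_lt hAtop.lt_top hBtop.lt_top).ne
  refine ⟨(ENNReal.ofReal (w z))⁻¹ * (M + 1), ?_, ?_, ?_⟩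
  · exact ENNReal.mul_pos (ENNReal.inv_ne_zero.2 ENNReal.ofReal_ne_top) (by simp)
  · exact ENNReal.mul_lt_top (ENNReal.inv_lt_top.2 (ENNReal.ofReal_pos.2 (hwpos z)))
      (ENNReal.add_lt_top.2 ⟨hMtop.lt_top, ENNReal.one_lt_top⟩)
  intro F hF hFLp
  have hae1 : ∀ᵐ x ∂μ, ∫⁻ y, ENNReal.ofReal (‖⟪Sinv (ψ x), ψ y⟫‖ * mw w x y) ∂μ ≤ A := by
    filter_upwards [ae_le_essSup
      (fun x => ∫⁻ y, ENNReal.ofReal (|‖⟪Sinv (ψ x), ψ y⟫‖| * mw w x y) ∂μ) (μ := μ)] with x hx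
    have h' : (∫⁻ y, ENNReal.ofReal (|‖⟪Sinv (ψ x), ψ y⟫‖| * mw w x y) ∂μ) ≤ A :=
      hx.trans (le_max_left _ _)
    simpa [abs_norm] using h'
  have hae2 : ∀ᵐ x ∂μ, ∫⁻ y, ENNReal.ofReal
      (|oscU (fun x y => ⟪Sinv (ψ x), ψ y⟫) 𝒰.U x y| * mw w x y) ∂μ ≤ ENNReal.ofReal δ := by
    filter_upwards [ae_le_essSup
      (fun x => ∫⁻ y, ENNReal.ofReal
        (|oscU (fun x y => ⟪Sinv (ψ x), ψ y⟫) 𝒰.U x y| * mw w x y) ∂μ) (μ := μ)] with x hx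
    exact hx.trans ((le_max_left _ _).trans hosc.le)
  have main : ∀ᵐ x ∂μ, (∫⁻ y, (‖F y * ⟪Sinv (ψ x), ψ y⟫‖₊ : ℝ≥0∞) ∂μ) ≤
      ENNReal.ofReal (mw w x z) * (ENNReal.ofReal (w z))⁻¹ *
        (eLpNorm (fun x => ‖F x‖ * w x) p μ * M) := by
    filter_upwards [hae1, hae2] with x h1 h2
    have hkey : ∀ y, ENNReal.ofReal (‖⟪Sinv (ψ x), ψ y⟫‖ * mw w x y) ≤ B := by
      intro y
      obtain ⟨i, hyi⟩ : ∃ i, y ∈ 𝒰.U i := Set.mem_iUnion.mp (by rw [𝒰.covers]; trivial)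
      have hpt : ∀ t ∈ 𝒰.U i, ‖⟪Sinv (ψ x), ψ y⟫‖ * mw w x y ≤
          CmU * (|oscU (fun x y => ⟪Sinv (ψ x), ψ y⟫) 𝒰.U x t| * mw w x t +
            ‖⟪Sinv (ψ x), ψ t⟫‖ * mw w x t) := by
        intro t ht
        have hQ : y ∈ ⋃ (j) (_ : t ∈ 𝒰.U j), 𝒰.U j :=
          Set.mem_iUnion.2 ⟨i, Set.mem_iUnion.2 ⟨ht, hyi⟩⟩
        have hbdd : BddAbove ((fun s => ‖(⟪Sinv (ψ x), ψ t⟫ : ℂ) - ⟪Sinv (ψ x), ψ s⟫‖) ''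
            ⋃ (j) (_ : t ∈ 𝒰.U j), 𝒰.U j) := by
          refine ⟨‖(⟪Sinv (ψ x), ψ t⟫ : ℂ)‖ + ‖Sinv (ψ x)‖ * C, ?_⟩
          rintro r ⟨s, -, rfl⟩
          refine (norm_sub_le _ _).trans (add_le_add_right ?_ _)
          exact (norm_inner_le_norm _ _).trans
            (mul_le_mul_of_nonneg_left (hψbd s) (norm_nonneg _))
        have hoscel : ‖(⟪Sinv (ψ x), ψ y⟫ : ℂ) - ⟪Sinv (ψ x), ψ t⟫‖ ≤
            oscU (fun x y => ⟪Sinv (ψ x), ψ y⟫) 𝒰.U x t := by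
          rw [norm_sub_rev]
          exact le_csSup hbdd ⟨y, hQ, rfl⟩
        have hRyb : ‖(⟪Sinv (ψ x), ψ y⟫ : ℂ)‖ ≤ ‖(⟪Sinv (ψ x), ψ t⟫ : ℂ)‖ +
            |oscU (fun x y => ⟪Sinv (ψ x), ψ y⟫) 𝒰.U x t| := by
          calc ‖(⟪Sinv (ψ x), ψ y⟫ : ℂ)‖
              = ‖(⟪Sinv (ψ x), ψ t⟫ : ℂ) + ((⟪Sinv (ψ x), ψ y⟫ : ℂ) - ⟪Sinv (ψ x), ψ t⟫)‖ := by
                congr 1; ring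
            _ ≤ ‖(⟪Sinv (ψ x), ψ t⟫ : ℂ)‖ + ‖(⟪Sinv (ψ x), ψ y⟫ : ℂ) - ⟪Sinv (ψ x), ψ t⟫‖ :=
                norm_add_le _ _
            _ ≤ _ := add_le_add_right (hoscel.trans (le_abs_self _)) _
        have hmxy : mw w x y ≤ mw w x t * CmU :=
          (mw_le_mul hwpos x t y).trans
            (mul_le_mul_of_nonneg_left (hcover i t ht y hyi) (hm0 x t))
        calc ‖⟪Sinv (ψ x), ψ y⟫‖ * mw w x y
            ≤ (‖⟪Sinv (ψ x), ψ t⟫‖ +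
                |oscU (fun x y => ⟪Sinv (ψ x), ψ y⟫) 𝒰.U x t|) * (mw w x t * CmU) :=
              mul_le_mul hRyb hmxy (hm0 x y) (by positivity)
          _ = CmU * (|oscU (fun x y => ⟪Sinv (ψ x), ψ y⟫) 𝒰.U x t| * mw w x t +
                ‖⟪Sinv (ψ x), ψ t⟫‖ * mw w x t) := by ring
      have hmeasr : AEMeasurable
          (fun t : X => ENNReal.ofReal (‖⟪Sinv (ψ x), ψ t⟫‖ * mw w x t)) μ :=
        (((hRcont x).norm.mul (hmcont x)).measurable.ennreal_ofReal).aemeasurable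
      have hmul : ENNReal.ofReal (‖⟪Sinv (ψ x), ψ y⟫‖ * mw w x y) * μ (𝒰.U i) ≤ K := by
        calc ENNReal.ofReal (‖⟪Sinv (ψ x), ψ y⟫‖ * mw w x y) * μ (𝒰.U i)
            = ∫⁻ t, (𝒰.U i).indicator
                (fun _ => ENNReal.ofReal (‖⟪Sinv (ψ x), ψ y⟫‖ * mw w x y)) t ∂μ := by
              rw [lintegral_indicator_const (𝒰.measU i)]
          _ ≤ ∫⁻ t, ENNReal.ofReal CmU *
              (ENNReal.ofReal (|oscU (fun x y => ⟪Sinv (ψ x), ψ y⟫) 𝒰.U x t| * mw w x t) +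
               ENNReal.ofReal (‖⟪Sinv (ψ x), ψ t⟫‖ * mw w x t)) ∂μ := by
              refine lintegral_mono fun t => ?_
              by_cases ht : t ∈ 𝒰.U i
              · rw [Set.indicator_of_mem ht]
                calc ENNReal.ofReal (‖⟪Sinv (ψ x), ψ y⟫‖ * mw w x y)
                    ≤ ENNReal.ofReal (CmU *
                        (|oscU (fun x y => ⟪Sinv (ψ x), ψ y⟫) 𝒰.U x t| * mw w x t +
                          ‖⟪Sinv (ψ x), ψ t⟫‖ * mw w x t)) :=
                      ENNReal.ofReal_le_ofReal (hpt t ht)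
                  _ = ENNReal.ofReal CmU *
                      (ENNReal.ofReal (|oscU (fun x y => ⟪Sinv (ψ x), ψ y⟫) 𝒰.U x t| *
                          mw w x t) +
                       ENNReal.ofReal (‖⟪Sinv (ψ x), ψ t⟫‖ * mw w x t)) := by
                      rw [ENNReal.ofReal_mul hCmU0,
                        ENNReal.ofReal_add (mul_nonneg (abs_nonneg _) (hm0 x t))
                          (mul_nonneg (norm_nonneg _) (hm0 x t))]
              · rw [Set.indicator_of_notMem ht]; exact zero_le
          _ = ENNReal.ofReal CmU * ∫⁻ t,
              (ENNReal.ofReal (|oscU (fun x y => ⟪Sinv (ψ x), ψ y⟫) 𝒰.U x t| * mw w x t) +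
               ENNReal.ofReal (‖⟪Sinv (ψ x), ψ t⟫‖ * mw w x t)) ∂μ :=
              lintegral_const_mul' _ _ ENNReal.ofReal_ne_top
          _ = ENNReal.ofReal CmU *
              ((∫⁻ t, ENNReal.ofReal
                  (|oscU (fun x y => ⟪Sinv (ψ x), ψ y⟫) 𝒰.U x t| * mw w x t) ∂μ) +
               ∫⁻ t, ENNReal.ofReal (‖⟪Sinv (ψ x), ψ t⟫‖ * mw w x t) ∂μ) := by
              rw [lintegral_add_right' _ hmeasr]
          _ ≤ ENNReal.ofReal CmU * (ENNReal.ofReal δ + A) :=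
              mul_le_mul_right (add_le_add h2 h1) _
          _ = K := hKdef.symm
      rw [hBdef, ENNReal.le_div_iff_mul_le (Or.inl hD0) (Or.inl hDtop)]
      calc ENNReal.ofReal (‖⟪Sinv (ψ x), ψ y⟫‖ * mw w x y) * 𝒰.measLower
          ≤ ENNReal.ofReal (‖⟪Sinv (ψ x), ψ y⟫‖ * mw w x y) * μ (𝒰.U i) :=
            mul_le_mul_right (𝒰.lower i) _
        _ ≤ K := hmul
    have hgM1 : ∫⁻ y, ENNReal.ofReal (‖⟪Sinv (ψ x), ψ y⟫‖ * mw w x y) ∂μ ≤ M :=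
      h1.trans (le_max_left _ _)
    have hgMinf : ∀ y, ENNReal.ofReal (‖⟪Sinv (ψ x), ψ y⟫‖ * mw w x y) ≤ M :=
      fun y => (hkey y).trans (le_max_right _ _)
    have hhmeas : AEMeasurable (fun y => ‖F y‖ * w y) μ :=
      (hF.norm.aemeasurable).mul hw.measurable.aemeasurable
    have hgmeas : AEMeasurable
        (fun y => ENNReal.ofReal (‖⟪Sinv (ψ x), ψ y⟫‖ * mw w x y)) μ :=
      (((hRcont x).norm.mul (hmcont x)).measurable.ennreal_ofReal).aemeasurable
    have hold := holder_aux hhmeas hgmeas hp hMtop hgM1 hgMinf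
    have hpt2 : ∀ y, (‖F y * ⟪Sinv (ψ x), ψ y⟫‖₊ : ℝ≥0∞) ≤
        ENNReal.ofReal (mw w x z / w z) *
          ((‖(‖F y‖ * w y)‖₊ : ℝ≥0∞) *
            ENNReal.ofReal (‖⟪Sinv (ψ x), ψ y⟫‖ * mw w x y)) := by
      intro y
      have hwz : w z ≤ mw w x y * mw w x z * w y := by
        have ha : w z / w y ≤ mw w y z := le_max_right _ _
        have hb : mw w y z ≤ mw w y x * mw w x z := mw_le_mul hwpos y x z
        have hc : mw w y x = mw w x y := mw_symm w y x
        have hd : w z / w y ≤ mw w x y * mw w x z := by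
          rw [← hc]; exact ha.trans hb
        calc w z = (w z / w y) * w y := (div_mul_cancel₀ (w z) (hwpos y).ne').symm
          _ ≤ (mw w x y * mw w x z) * w y := mul_le_mul_of_nonneg_right hd (hwpos y).le
      have hk1 : 1 ≤ (mw w x z / w z) * (w y * mw w x y) := by
        rw [div_mul_eq_mul_div, le_div_iff₀ (hwpos z)]
        nlinarith [hwz]
      have hreal : ‖F y * ⟪Sinv (ψ x), ψ y⟫‖ ≤
          (mw w x z / w z) * ((‖F y‖ * w y) * (‖⟪Sinv (ψ x), ψ y⟫‖ * mw w x y)) := by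
        rw [norm_mul]
        calc ‖F y‖ * ‖⟪Sinv (ψ x), ψ y⟫‖
            ≤ ((mw w x z / w z) * (w y * mw w x y)) * (‖F y‖ * ‖⟪Sinv (ψ x), ψ y⟫‖) :=
              le_mul_of_one_le_left (by positivity) hk1
          _ = (mw w x z / w z) * ((‖F y‖ * w y) * (‖⟪Sinv (ψ x), ψ y⟫‖ * mw w x y)) := by
              ring
      calc (‖F y * ⟪Sinv (ψ x), ψ y⟫‖₊ : ℝ≥0∞)
          = ENNReal.ofReal ‖F y * ⟪Sinv (ψ x), ψ y⟫‖ := (ofReal_norm _).symm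
        _ ≤ ENNReal.ofReal ((mw w x z / w z) *
              ((‖F y‖ * w y) * (‖⟪Sinv (ψ x), ψ y⟫‖ * mw w x y))) :=
            ENNReal.ofReal_le_ofReal hreal
        _ = ENNReal.ofReal (mw w x z / w z) *
            (ENNReal.ofReal (‖F y‖ * w y) *
              ENNReal.ofReal (‖⟪Sinv (ψ x), ψ y⟫‖ * mw w x y)) := by
            rw [ENNReal.ofReal_mul (div_nonneg (hm0 x z) (hwpos z).le),
              ENNReal.ofReal_mul (mul_nonneg (norm_nonneg _) (hwpos y).le)]
        _ = ENNReal.ofReal (mw w x z / w z) *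
            ((‖(‖F y‖ * w y)‖₊ : ℝ≥0∞) *
              ENNReal.ofReal (‖⟪Sinv (ψ x), ψ y⟫‖ * mw w x y)) := by
            rw [← Real.enorm_eq_ofReal (mul_nonneg (norm_nonneg _) (hwpos y).le)]; rfl
    calc ∫⁻ y, (‖F y * ⟪Sinv (ψ x), ψ y⟫‖₊ : ℝ≥0∞) ∂μ
        ≤ ∫⁻ y, ENNReal.ofReal (mw w x z / w z) *
            ((‖(‖F y‖ * w y)‖₊ : ℝ≥0∞) *
              ENNReal.ofReal (‖⟪Sinv (ψ x), ψ y⟫‖ * mw w x y)) ∂μ :=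
          lintegral_mono hpt2
      _ = ENNReal.ofReal (mw w x z / w z) *
          ∫⁻ y, (‖(‖F y‖ * w y)‖₊ : ℝ≥0∞) *
            ENNReal.ofReal (‖⟪Sinv (ψ x), ψ y⟫‖ * mw w x y) ∂μ :=
          lintegral_const_mul' _ _ ENNReal.ofReal_ne_top
      _ ≤ ENNReal.ofReal (mw w x z / w z) * (eLpNorm (fun x => ‖F x‖ * w x) p μ * M) :=
          mul_le_mul_right hold _
      _ = ENNReal.ofReal (mw w x z) * (ENNReal.ofReal (w z))⁻¹ *
          (eLpNorm (fun x => ‖F x‖ * w x) p μ * M) := by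
          rw [ENNReal.ofReal_div_of_pos (hwpos z), div_eq_mul_inv]
  constructor
  · filter_upwards [main] with x hx
    refine ⟨hF.mul (hRcont x).aestronglyMeasurable, ?_⟩
    refine lt_of_le_of_lt hx ?_
    exact ENNReal.mul_lt_top
      (ENNReal.mul_lt_top ENNReal.ofReal_lt_top
        (ENNReal.inv_lt_top.2 (ENNReal.ofReal_pos.2 (hwpos z))))
      (ENNReal.mul_lt_top hFLp hMtop.lt_top)
  · filter_upwards [main] with x hx
    calc (‖∫ y, F y * ⟪Sinv (ψ x), ψ y⟫ ∂μ‖₊ : ℝ≥0∞)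
        ≤ ∫⁻ y, (‖F y * ⟪Sinv (ψ x), ψ y⟫‖₊ : ℝ≥0∞) ∂μ :=
          enorm_integral_le_lintegral_enorm _
      _ ≤ ENNReal.ofReal (mw w x z) * (ENNReal.ofReal (w z))⁻¹ *
          (eLpNorm (fun x => ‖F x‖ * w x) p μ * M) := hx
      _ = ((ENNReal.ofReal (w z))⁻¹ * M) *
          (ENNReal.ofReal (mw w x z) * eLpNorm (fun x => ‖F x‖ * w x) p μ) := by ring
      _ ≤ ((ENNReal.ofReal (w z))⁻¹ * (M + 1)) *
          (ENNReal.ofReal (mw w x z) * eLpNorm (fun x => ‖F x‖ * w x) p μ) := by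
          gcongr
          exact le_self_add
      _ = (ENNReal.ofReal (w z))⁻¹ * (M + 1) * ENNReal.ofReal (mw w x z) *
          eLpNorm (fun x => ‖F x‖ * w x) p μ := by ring
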